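/- Let λ > 0 and let G₂(b) = (b₁/(2π|b|²))(1 − e^{−|b|²/(2λ²)}) for b ∈ ℝ² \ {0}, extended smoothly by 0 at b = 0. Then for all nonnegative integers α₁, α₂, the mixed derivative ∂^{α₁}_{b₁} ∂^{α₂}_{b₂} G₂(b) evaluated at b = 0 equals (1/(2π)) (1/(2λ²))^{(α₁+α₂+1)/2} ((−1)^{(α₁+α₂−1)/2}/((α₁+α₂+1)/2)!) C((α₁+α₂−1)/2, (α₁−1)/2) (α₁!)(α₂!) when α₁ is odd and α₂ is even, and equals 0 otherwise. -/

import Mathlib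

open MeasureTheory Real

/-- first partial derivative `∂_{x₁}` of a function on `ℝ²`. -/
noncomputable def pd1 (f : ℝ × ℝ → ℝ) : ℝ × ℝ → ℝ := fun x => deriv (fun s => f (s, x.2)) x.1

/-- second partial derivative `∂_{x₂}` of a function on `ℝ²`. -/
noncomputable def pd2 (f : ℝ × ℝ → ℝ) : ℝ × ℝ → ℝ := fun x => deriv (fun s => f (x.1, s)) x.2

/-- mixed partial derivative `∂^{k₁}_{x₁} ∂^{k₂}_{x₂}`. -/
noncomputable def md (k1 k2 : ℕ) (f : ℝ × ℝ → ℝ) : ℝ × ℝ → ℝ := pd1^[k1] (pd2^[k2] f)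

/-- the Gaussian vorticity `φ₀₀(x;λ) = (1/(πλ²)) exp(−|x|²/λ²)`. -/
noncomputable def phi00 (lam : ℝ) (x : ℝ × ℝ) : ℝ :=
  (1 / (π * lam ^ 2)) * Real.exp (-(x.1 ^ 2 + x.2 ^ 2) / lam ^ 2)

/-- first component of the Lamb–Oseen velocity field `V₀₀(x;λ)`. -/
noncomputable def V001 (lam : ℝ) (x : ℝ × ℝ) : ℝ :=
  (1 / (2 * π)) * (-x.2 / (x.1 ^ 2 + x.2 ^ 2)) * (1 - Real.exp (-(x.1 ^ 2 + x.2 ^ 2) / lam ^ 2))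

/-- second component of the Lamb–Oseen velocity field `V₀₀(x;λ)`. -/
noncomputable def V002 (lam : ℝ) (x : ℝ × ℝ) : ℝ :=
  (1 / (2 * π)) * (x.1 / (x.1 ^ 2 + x.2 ^ 2)) * (1 - Real.exp (-(x.1 ^ 2 + x.2 ^ 2) / lam ^ 2))

/-- two-dimensional Hermite polynomial `H_{n₁,n₂}(z;λ)` defined via the generating function. -/
noncomputable def hpoly (lam : ℝ) (n1 n2 : ℕ) (z : ℝ × ℝ) : ℝ :=
  md n1 n2 (fun τ => Real.exp ((2 * (τ.1 * z.1 + τ.2 * z.2) - (τ.1 ^ 2 + τ.2 ^ 2)) / lam ^ 2)) (0, 0)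

/-- Hermite function `φ_{k₁,k₂}(x;λ) = ∂^{k₁}_{x₁} ∂^{k₂}_{x₂} φ₀₀(x;λ)`. -/
noncomputable def hfun (lam : ℝ) (k1 k2 : ℕ) : ℝ × ℝ → ℝ := md k1 k2 (phi00 lam)

/-- second component of , extended by 0 at the origin. -/
noncomputable def G2 (lam : ℝ) (b : ℝ × ℝ) : ℝ :=
  if b = 0 then 0
  else (b.1 / (2 * π * (b.1 ^ 2 + b.2 ^ 2)))
    * (1 - Real.exp (-(b.1 ^ 2 + b.2 ^ 2) / (2 * lam ^ 2)))

namespace H2aux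

/-! ### One-variable everywhere-convergent power series -/

/-- sum of a power series with coefficients `c`. -/
noncomputable def S (c : ℕ → ℝ) (x : ℝ) : ℝ := ∑' n, c n * x ^ n

/-- everywhere absolutely summable coefficient sequences. -/
def Dec (c : ℕ → ℝ) : Prop := ∀ r : ℝ, 0 ≤ r → Summable fun n => |c n| * r ^ n

theorem ofScalars_coeff (c : ℕ → ℝ) (n : ℕ) :
    (FormalMultilinearSeries.ofScalars ℝ c).coeff n = c n := by
  have h := FormalMultilinearSeries.ofScalars_apply_eq (E := ℝ) (c := c) 1 n
  rw [FormalMultilinearSeries.coeff, show ((1 : Fin n → ℝ)) = (fun _ => (1:ℝ)) from rfl, h]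
  simp

theorem Dec.summable {c : ℕ → ℝ} (hc : Dec c) (x : ℝ) :
    Summable fun n => c n * x ^ n := by
  refine Summable.of_norm ?_
  have := hc |x| (abs_nonneg x)
  simpa [Real.norm_eq_abs, abs_mul, abs_pow] using this

theorem Dec.hps {c : ℕ → ℝ} (hc : Dec c) :
    HasFPowerSeriesOnBall (S c) (FormalMultilinearSeries.ofScalars ℝ c) 0 ⊤ := by
  refine ⟨?_, by simp, ?_⟩
  · rw [FormalMultilinearSeries.radius_eq_top_of_summable_norm]
    intro r
    simpa [FormalMultilinearSeries.ofScalars_norm, ofScalars_coeff, Real.norm_eq_abs]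
      using hc r r.coe_nonneg
  · intro y _
    have := (hc.summable y).hasSum
    simpa [FormalMultilinearSeries.ofScalars_apply_eq, smul_eq_mul, S, ofScalars_coeff,
      mul_comm] using this

theorem Dec.taylor {c : ℕ → ℝ} (hc : Dec c) (n : ℕ) :
    deriv^[n] (S c) 0 = (n.factorial : ℝ) * c n := by
  have h := hc.hps.factorial_smul (1 : ℝ) n
  rw [FormalMultilinearSeries.ofScalars_apply_eq] at h
  rw [← iteratedDeriv_eq_iterate, iteratedDeriv_eq_iteratedFDeriv, ← h]
  simp [nsmul_eq_mul]

/-! ### Even and odd extensions of coefficient sequences -/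

/-- spread a sequence onto even indices. -/
noncomputable def evenExt (d : ℕ → ℝ) (j : ℕ) : ℝ := if Even j then d (j / 2) else 0
/-- spread a sequence onto odd indices. -/
noncomputable def oddExt (d : ℕ → ℝ) (j : ℕ) : ℝ := if Odd j then d (j / 2) else 0

theorem evenExt_two_mul (d : ℕ → ℝ) (i : ℕ) : evenExt d (2 * i) = d i := by
  simp [evenExt, even_two_mul i, Nat.mul_div_cancel_left]

theorem oddExt_two_mul_add_one (d : ℕ → ℝ) (i : ℕ) : oddExt d (2 * i + 1) = d i := by
  have h2 : (2 * i + 1) / 2 = i := by omega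
  simp [oddExt, h2, odd_two_mul_add_one i]

theorem evenExt_odd {d : ℕ → ℝ} {j : ℕ} (h : Odd j) : evenExt d j = 0 := by
  simp [evenExt, Nat.not_even_iff_odd.mpr h]

theorem oddExt_even {d : ℕ → ℝ} {j : ℕ} (h : Even j) : oddExt d j = 0 := by
  simp [oddExt, Nat.not_odd_iff_even.mpr h]

theorem two_mul_inj : Function.Injective (fun i : ℕ => 2 * i) := by
  intro a b h
  have : 2 * a = 2 * b := h
  omega

theorem two_mul_add_one_inj : Function.Injective (fun i : ℕ => 2 * i + 1) := by
  intro a b h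
  have : 2 * a + 1 = 2 * b + 1 := h
  omega

theorem S_evenExt (d : ℕ → ℝ) (t : ℝ) : S (evenExt d) t = ∑' i, d i * (t ^ 2) ^ i := by
  rw [S, ← Function.Injective.tsum_eq (g := fun i => 2 * i)
    (f := fun j => evenExt d j * t ^ j) two_mul_inj ?_]
  · exact tsum_congr fun i => by rw [evenExt_two_mul, pow_mul]
  · intro j hj
    rcases Nat.even_or_odd j with he | ho
    · obtain ⟨i, hi⟩ := he
      exact ⟨i, by show 2 * i = j; omega⟩
    · simp only [Function.mem_support, ne_eq, not_not] at hj
      exact absurd (by rw [evenExt_odd ho, zero_mul]) hj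

theorem S_oddExt (d : ℕ → ℝ) (t : ℝ) : S (oddExt d) t = t * ∑' i, d i * (t ^ 2) ^ i := by
  rw [S, ← Function.Injective.tsum_eq (g := fun i => 2 * i + 1)
    (f := fun j => oddExt d j * t ^ j) two_mul_add_one_inj ?_]
  · rw [← tsum_mul_left]
    exact tsum_congr fun i => by rw [oddExt_two_mul_add_one, pow_succ, pow_mul]; ring
  · intro j hj
    rcases Nat.even_or_odd j with he | ho
    · simp only [Function.mem_support, ne_eq, not_not] at hj
      exact absurd (by rw [oddExt_even he, zero_mul]) hj
    · obtain ⟨i, hi⟩ := ho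
      exact ⟨i, by show 2 * i + 1 = j; omega⟩

theorem Dec.evenExt' {d : ℕ → ℝ} (hd : Dec d) : Dec (evenExt d) := by
  intro r hr
  rw [← Function.Injective.summable_iff (f := fun j => |evenExt d j| * r ^ j)
    two_mul_inj ?_]
  · have := hd (r ^ 2) (sq_nonneg r)
    refine this.congr fun i => ?_
    simp [Function.comp, evenExt_two_mul, pow_mul]
  · intro j hj
    rcases Nat.even_or_odd j with he | ho
    · obtain ⟨i, hi⟩ := he
      exact absurd ⟨i, by show 2 * i = j; omega⟩ hj
    · show |evenExt d j| * r ^ j = 0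
      rw [evenExt_odd ho, abs_zero, zero_mul]

theorem Dec.oddExt' {d : ℕ → ℝ} (hd : Dec d) : Dec (oddExt d) := by
  intro r hr
  rw [← Function.Injective.summable_iff (f := fun j => |oddExt d j| * r ^ j)
    two_mul_add_one_inj ?_]
  · have := ((hd (r ^ 2) (sq_nonneg r)).mul_right r)
    refine this.congr fun i => ?_
    simp only [Function.comp, oddExt_two_mul_add_one, pow_succ, pow_mul]
    ring
  · intro j hj
    rcases Nat.even_or_odd j with he | ho
    · show |oddExt d j| * r ^ j = 0
      rw [oddExt_even he, abs_zero, zero_mul]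
    · obtain ⟨i, hi⟩ := ho
      exact absurd ⟨i, by show 2 * i + 1 = j; omega⟩ hj

theorem Dec.const_mul {d : ℕ → ℝ} (hd : Dec d) (a : ℝ) : Dec (fun n => a * d n) := by
  intro r hr
  refine ((hd r hr).mul_left |a|).congr fun i => ?_
  rw [abs_mul]; ring

theorem iter_deriv_zero (n : ℕ) : deriv^[n] (fun _ : ℝ => (0 : ℝ)) = fun _ => 0 := by
  induction n with
  | zero => rfl
  | succ k ih =>
      rw [Function.iterate_succ_apply,
        show deriv (fun _ : ℝ => (0:ℝ)) = fun _ => 0 from deriv_const' 0, ih]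

/-! ### Binomial double series -/

/-- two-variable binomial family. -/
noncomputable def H (c : ℕ → ℝ) (x y : ℝ) (p : ℕ × ℕ) : ℝ :=
  c (p.1 + p.2) * ((p.1 + p.2).choose p.1 : ℝ) * x ^ p.1 * y ^ p.2

theorem antidiag_sum (c : ℕ → ℝ) (x y : ℝ) (n : ℕ) :
    ∑ p ∈ Finset.HasAntidiagonal.antidiagonal n, H c x y p = c n * (x + y) ^ n := by
  rw [Finset.Nat.sum_antidiagonal_eq_sum_range_succ_mk, add_pow, Finset.mul_sum]
  refine Finset.sum_congr rfl fun k hk => ?_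
  have hkn : k ≤ n := Nat.lt_succ_iff.mp (Finset.mem_range.mp hk)
  have h1 : k + (n - k) = n := by omega
  simp only [H, h1]
  ring

theorem key_summable {c : ℕ → ℝ} (hc : Dec c) {x y : ℝ} (hx : 0 ≤ x) (hy : 0 ≤ y) :
    Summable (H c x y) := by
  refine Summable.of_norm ?_
  have habs : (fun p => ‖H c x y p‖) = H (fun n => |c n|) x y := by
    funext p
    simp only [H, Real.norm_eq_abs, abs_mul, abs_pow, abs_of_nonneg hx, abs_of_nonneg hy,
      Nat.abs_cast]
  rw [habs]
  rw [← (Finset.HasAntidiagonal.sigmaAntidiagonalEquivProd (A := ℕ)).summable_iff]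
  have hnn : ∀ σ : (Σ n : ℕ, Finset.HasAntidiagonal.antidiagonal n),
      0 ≤ H (fun n => |c n|) x y (Finset.HasAntidiagonal.sigmaAntidiagonalEquivProd σ) := by
    intro σ
    exact mul_nonneg (mul_nonneg (mul_nonneg (abs_nonneg _) (Nat.cast_nonneg _))
      (pow_nonneg hx _)) (pow_nonneg hy _)
  rw [show (H (fun n => |c n|) x y ∘ ⇑Finset.HasAntidiagonal.sigmaAntidiagonalEquivProd)
      = fun σ => H (fun n => |c n|) x y (Finset.HasAntidiagonal.sigmaAntidiagonalEquivProd σ) from rfl]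
  rw [summable_sigma_of_nonneg hnn]
  constructor
  · intro n; exact Summable.of_finite
  · refine Summable.congr (hc (x + y) (add_nonneg hx hy)) fun n => ?_
    rw [← antidiag_sum (fun n => |c n|) x y n]
    rw [← Finset.tsum_subtype]
    rfl

theorem key_tsum {c : ℕ → ℝ} (hc : Dec c) {x y : ℝ} (hx : 0 ≤ x) (hy : 0 ≤ y) :
    ∑' p : ℕ × ℕ, H c x y p = ∑' n, c n * (x + y) ^ n := by
  rw [← (Finset.HasAntidiagonal.sigmaAntidiagonalEquivProd (A := ℕ)).tsum_eq (H c x y)]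
  have hs : Summable (fun σ => H c x y (Finset.HasAntidiagonal.sigmaAntidiagonalEquivProd σ)) :=
    (Finset.HasAntidiagonal.sigmaAntidiagonalEquivProd (A := ℕ)).summable_iff.mpr (key_summable hc hx hy)
  rw [Summable.tsum_sigma (f := fun σ => H c x y (Finset.HasAntidiagonal.sigmaAntidiagonalEquivProd σ)) hs]
  refine tsum_congr fun n => ?_
  rw [← antidiag_sum c x y n, ← Finset.tsum_subtype]
  rfl

/-! ### The concrete coefficients -/

variable (lam : ℝ)

/-- Taylor coefficients of `u ↦ (1 - exp (-u/(2λ²)))/(2π u)`. -/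
noncomputable def c0 (n : ℕ) : ℝ :=
  (1 / (2 * π)) * ((-1 : ℝ) ^ n / ((n + 1).factorial : ℝ)) * (1 / (2 * lam ^ 2)) ^ (n + 1)

theorem dec_c0 (hlam : 0 < lam) : Dec (c0 lam) := by
  intro r hr
  set B : ℝ := 1 / (2 * lam ^ 2) with hB
  have hBpos : 0 < B := by positivity
  have hbound : ∀ n : ℕ, |c0 lam n| * r ^ n
      ≤ ((1 / (2 * π)) * B) * ((B * r) ^ n / n.factorial) := by
    intro n
    have hpi : (0:ℝ) < π := Real.pi_pos
    have h1 : |c0 lam n| = (1 / (2 * π)) * (1 / ((n + 1).factorial : ℝ)) * B ^ (n + 1) := by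
      rw [c0, abs_mul, abs_mul, ← hB]
      congr 1
      · congr 1
        · exact abs_of_pos (by positivity)
        · rw [abs_div, abs_pow, abs_neg, abs_one, one_pow, Nat.abs_cast]
      · rw [abs_pow, abs_of_pos hBpos]
    rw [h1]
    have hfle : (1 : ℝ) / ((n + 1).factorial : ℝ) ≤ 1 / (n.factorial : ℝ) := by
      apply one_div_le_one_div_of_le
      · exact_mod_cast Nat.factorial_pos n
      · exact_mod_cast Nat.factorial_le (Nat.le_succ n)
    calc (1 / (2 * π)) * (1 / ((n + 1).factorial : ℝ)) * B ^ (n + 1) * r ^ n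
        ≤ (1 / (2 * π)) * (1 / (n.factorial : ℝ)) * B ^ (n + 1) * r ^ n := by
          have h2 : (0:ℝ) ≤ B ^ (n+1) * r ^ n := by positivity
          nlinarith [mul_nonneg (by positivity : (0:ℝ) ≤ 1/(2*π)) h2, hfle,
            mul_le_mul_of_nonneg_right hfle h2]
      _ = ((1 / (2 * π)) * B) * ((B * r) ^ n / n.factorial) := by
          rw [pow_succ, mul_pow]; field_simp
  refine Summable.of_nonneg_of_le (fun n => by positivity) hbound ?_
  exact (Real.summable_pow_div_factorial (B * r)).mul_left _

theorem dec_c0_abs (hlam : 0 < lam) : Dec (fun n => |c0 lam n|) := by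
  intro r hr
  exact (dec_c0 lam hlam r hr).congr fun n => by rw [abs_abs]

theorem S_c0_eq (hlam : 0 < lam) {u : ℝ} (hu : u ≠ 0) :
    S (c0 lam) u = (1 / (2 * π * u)) * (1 - Real.exp (-u / (2 * lam ^ 2))) := by
  have h2l : (2 * lam ^ 2) ≠ 0 := by positivity
  set v : ℝ := u / (2 * lam ^ 2) with hv
  have hexp : Real.exp (-v) = ∑' n, (-v) ^ n / (n.factorial : ℝ) := by
    rw [Real.exp_eq_exp_ℝ, NormedSpace.exp_eq_tsum_div]
  have hsum : Summable fun n => (-v) ^ n / (n.factorial : ℝ) :=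
    Real.summable_pow_div_factorial (-v)
  have hshift : ∑' n : ℕ, (-v) ^ (n + 1) / ((n + 1).factorial : ℝ)
      = Real.exp (-v) - 1 := by
    have h0 := Summable.tsum_eq_zero_add hsum
    rw [hexp]
    simp only [pow_zero, Nat.factorial_zero, Nat.cast_one] at h0
    rw [h0]; ring
  have hterm : ∀ n : ℕ, c0 lam n * u ^ n
      = (-(1 / (2 * π * u))) * ((-v) ^ (n + 1) / ((n + 1).factorial : ℝ)) := by
    intro n
    have hneg : (-v) ^ (n+1) = (-1 : ℝ) ^ (n+1) * v ^ (n+1) := by rw [neg_pow]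
    rw [c0, hneg, hv, pow_succ (-1:ℝ) n, div_pow u, pow_succ u n]
    have hpi : π ≠ 0 := Real.pi_ne_zero
    have hfact : (((n+1)).factorial : ℝ) ≠ 0 := Nat.cast_ne_zero.mpr (Nat.factorial_ne_zero _)
    field_simp
    rw [← mul_pow, one_div_mul_cancel h2l, one_pow]
  rw [S]
  calc ∑' n, c0 lam n * u ^ n
      = ∑' n, (-(1 / (2 * π * u))) * ((-v) ^ (n + 1) / ((n + 1).factorial : ℝ)) :=
        tsum_congr hterm
    _ = (-(1 / (2 * π * u))) * ∑' n, ((-v) ^ (n + 1) / ((n + 1).factorial : ℝ)) :=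
        tsum_mul_left
    _ = (1 / (2 * π * u)) * (1 - Real.exp (-u / (2 * lam ^ 2))) := by
        rw [hshift, hv]; ring_nf

theorem claimA (hlam : 0 < lam) (s t : ℝ) :
    G2 lam (s, t) = s * S (c0 lam) (s ^ 2 + t ^ 2) := by
  by_cases h : ((s, t) : ℝ × ℝ) = 0
  · have hs : s = 0 := (Prod.ext_iff.mp h).1
    rw [G2, if_pos h, hs, zero_mul]
  · have h' : s ≠ 0 ∨ t ≠ 0 := by
      by_contra hc
      push_neg at hc
      exact h (by simp [Prod.ext_iff, hc.1, hc.2])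
    have hst : s ^ 2 + t ^ 2 ≠ 0 := by
      rcases h' with hs | ht
      · have h2 : 0 < s ^ 2 := lt_of_le_of_ne (sq_nonneg s) (Ne.symm (pow_ne_zero 2 hs))
        nlinarith [sq_nonneg t]
      · have h2 : 0 < t ^ 2 := lt_of_le_of_ne (sq_nonneg t) (Ne.symm (pow_ne_zero 2 ht))
        nlinarith [sq_nonneg s]
    rw [G2, if_neg h, S_c0_eq lam hlam hst]
    show (s / (2 * π * (s ^ 2 + t ^ 2))) * _ = _
    ring

/-- row coefficients: `es lam s i` is the coefficient of `(t²)^i` in `G2 lam (s, t)`. -/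
noncomputable def es (s : ℝ) (i : ℕ) : ℝ :=
  s * ∑' k, (c0 lam (i + k) * (((i + k).choose i : ℕ) : ℝ)) * (s ^ 2) ^ k

theorem G2_row (hlam : 0 < lam) (s : ℝ) :
    (fun t => G2 lam (s, t)) = S (evenExt (es lam s)) := by
  funext t
  rw [claimA lam hlam, S_evenExt]
  rw [S, show s ^ 2 + t ^ 2 = t ^ 2 + s ^ 2 from add_comm _ _]
  rw [← key_tsum (dec_c0 lam hlam) (sq_nonneg t) (sq_nonneg s)]
  have hsum := key_summable (dec_c0 lam hlam) (sq_nonneg t) (sq_nonneg s)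
  rw [Summable.tsum_prod' hsum (fun b => hsum.prod_factor b)]
  rw [← tsum_mul_left]
  refine tsum_congr fun i => ?_
  have hterm : ∀ k, H (c0 lam) (t ^ 2) (s ^ 2) (i, k)
      = (t ^ 2) ^ i * ((c0 lam (i + k) * (((i + k).choose i : ℕ) : ℝ)) * (s ^ 2) ^ k) := by
    intro k
    simp only [H]
    ring
  rw [tsum_congr hterm, tsum_mul_left, es]
  ring

theorem dec_es (hlam : 0 < lam) (s : ℝ) : Dec (es lam s) := by
  intro r hr
  have hF : Summable (H (fun n => |c0 lam n|) r (s ^ 2)) :=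
    key_summable (dec_c0_abs lam hlam) hr (sq_nonneg s)
  have hF1 : Summable (H (fun n => |c0 lam n|) 1 (s ^ 2)) :=
    key_summable (dec_c0_abs lam hlam) zero_le_one (sq_nonneg s)
  have hnn : 0 ≤ H (fun n => |c0 lam n|) r (s ^ 2) := by
    intro p
    exact mul_nonneg (mul_nonneg (mul_nonneg (abs_nonneg _) (Nat.cast_nonneg _))
      (pow_nonneg hr _)) (pow_nonneg (sq_nonneg s) _)
  have hcol : Summable fun i => ∑' k, H (fun n => |c0 lam n|) r (s ^ 2) (i, k) :=
    ((summable_prod_of_nonneg hnn).mp hF).2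
  refine Summable.of_nonneg_of_le (fun i => by positivity) (fun i => ?_) (hcol.mul_left |s|)
  have hslice1 : Summable fun k =>
      ‖(c0 lam (i + k) * (((i + k).choose i : ℕ) : ℝ)) * (s ^ 2) ^ k‖ := by
    refine (hF1.prod_factor i).congr fun k => ?_
    simp only [H, Real.norm_eq_abs, abs_mul, abs_pow, abs_abs, Nat.abs_cast, one_pow,
      abs_of_nonneg (sq_nonneg s)]
    ring
  have h1 : |es lam s i| ≤ |s| * ∑' k, |c0 lam (i + k)| * (((i + k).choose i : ℕ) : ℝ)
      * (s ^ 2) ^ k := by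
    rw [es, abs_mul]
    refine mul_le_mul_of_nonneg_left ?_ (abs_nonneg s)
    refine le_trans (norm_tsum_le_tsum_norm hslice1) (le_of_eq (tsum_congr fun k => ?_))
    simp only [Real.norm_eq_abs, abs_mul, abs_pow, Nat.abs_cast, abs_of_nonneg (sq_nonneg s)]
  have h2 : ∑' k, H (fun n => |c0 lam n|) r (s ^ 2) (i, k)
      = r ^ i * ∑' k, |c0 lam (i + k)| * (((i + k).choose i : ℕ) : ℝ) * (s ^ 2) ^ k := by
    rw [← tsum_mul_left]
    refine tsum_congr fun k => ?_
    simp only [H]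
    ring
  calc |es lam s i| * r ^ i
      ≤ (|s| * ∑' k, |c0 lam (i + k)| * (((i + k).choose i : ℕ) : ℝ) * (s ^ 2) ^ k) * r ^ i :=
        mul_le_mul_of_nonneg_right h1 (pow_nonneg hr i)
    _ = |s| * ∑' k, H (fun n => |c0 lam n|) r (s ^ 2) (i, k) := by rw [h2]; ring

theorem dec_dm (hlam : 0 < lam) (m : ℕ) :
    Dec (fun k => c0 lam (m + k) * (((m + k).choose m : ℕ) : ℝ)) := by
  intro r hr
  have hF : Summable (H (fun n => |c0 lam n|) 1 r) :=
    key_summable (dec_c0_abs lam hlam) zero_le_one hr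
  have hinj : Function.Injective (fun k : ℕ => ((m, k) : ℕ × ℕ)) := by
    intro a b h
    exact congrArg Prod.snd h
  have := hF.comp_injective hinj
  refine this.congr fun k => ?_
  simp only [Function.comp, H, one_pow, abs_mul, Nat.abs_cast]
  ring

/-! ### Reduction of mixed partials to one-dimensional derivatives -/

theorem pd2_iter (k : ℕ) : ∀ (f : ℝ × ℝ → ℝ) (x : ℝ × ℝ),
    pd2^[k] f x = deriv^[k] (fun t => f (x.1, t)) x.2 := by
  induction k with
  | zero => intro f x; rfl
  | succ n ih =>
      intro f x
      rw [Function.iterate_succ_apply, ih (pd2 f) x, Function.iterate_succ_apply]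
      rfl

theorem pd1_iter (k : ℕ) : ∀ (f : ℝ × ℝ → ℝ) (x : ℝ × ℝ),
    pd1^[k] f x = deriv^[k] (fun s => f (s, x.2)) x.1 := by
  induction k with
  | zero => intro f x; rfl
  | succ n ih =>
      intro f x
      rw [Function.iterate_succ_apply, ih (pd1 f) x, Function.iterate_succ_apply]
      rfl

theorem md_eq (a1 a2 : ℕ) (f : ℝ × ℝ → ℝ) :
    md a1 a2 f 0 = deriv^[a1] (fun s => deriv^[a2] (fun t => f (s, t)) 0) 0 := by
  rw [md, pd1_iter a1 _ 0]
  show deriv^[a1] (fun s => pd2^[a2] f (s, (0:ℝ×ℝ).2)) (0:ℝ×ℝ).1 = _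
  have : (fun s => pd2^[a2] f (s, (0:ℝ×ℝ).2))
      = fun s => deriv^[a2] (fun t => f (s, t)) 0 := by
    funext s
    rw [pd2_iter a2 f (s, (0:ℝ×ℝ).2)]
    rfl
  rw [this]
  rfl

end H2aux

open H2aux in
/-- the mixed derivatives of  at the origin, i.e. the quantity
 of the paper. -/
theorem H2_derivative_formula (lam : ℝ) (hlam : 0 < lam) (a1 a2 : ℕ) :
    md a1 a2 (G2 lam) 0
      = if Odd a1 ∧ Even a2 then
          (1 / (2 * π)) * (1 / (2 * lam ^ 2)) ^ ((a1 + a2 + 1) / 2)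
            * ((-1 : ℝ) ^ ((a1 + a2 - 1) / 2) / (Nat.factorial ((a1 + a2 + 1) / 2) : ℝ))
            * (Nat.choose ((a1 + a2 - 1) / 2) ((a1 - 1) / 2) : ℝ)
            * (Nat.factorial a1 : ℝ) * (Nat.factorial a2 : ℝ)
        else 0 := by
  classical
  rw [md_eq]
  have hinner : (fun s => deriv^[a2] (fun t => G2 lam (s, t)) 0)
      = fun s => (a2.factorial : ℝ) * evenExt (es lam s) a2 := by
    funext s
    rw [G2_row lam hlam s]
    exact ((dec_es lam hlam s).evenExt').taylor a2
  rw [hinner]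
  by_cases ha2 : Even a2
  case neg =>
    have hz : (fun s : ℝ => (a2.factorial : ℝ) * evenExt (es lam s) a2)
        = fun _ => (0 : ℝ) := by
      funext s
      rw [evenExt_odd (Nat.not_even_iff_odd.mp ha2), mul_zero]
    rw [hz, iter_deriv_zero, if_neg (by tauto)]
  case pos =>
    obtain ⟨m, hm⟩ := ha2
    set dm : ℕ → ℝ := fun k => c0 lam (m + k) * (((m + k).choose m : ℕ) : ℝ) with hdm
    have hfun : (fun s : ℝ => (a2.factorial : ℝ) * evenExt (es lam s) a2)
        = S (fun j => (a2.factorial : ℝ) * oddExt dm j) := by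
      funext s
      have hEx : evenExt (es lam s) a2 = es lam s m := by
        rw [show a2 = 2 * m by omega, evenExt_two_mul]
      have hod : S (fun j => (a2.factorial : ℝ) * oddExt dm j) s
          = (a2.factorial : ℝ) * S (oddExt dm) s := by
        rw [S, S, ← tsum_mul_left]
        exact tsum_congr fun j => by ring
      rw [hEx, hod, S_oddExt]
      rfl
    rw [hfun, (((dec_dm lam hlam m).oddExt').const_mul (a2.factorial : ℝ)).taylor a1]
    by_cases ha1 : Odd a1
    · obtain ⟨j, hj⟩ := ha1
      have h1 : oddExt dm a1 = dm j := by
        rw [show a1 = 2 * j + 1 by omega]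
        exact oddExt_two_mul_add_one dm j
      rw [if_pos ⟨⟨j, hj⟩, ⟨m, hm⟩⟩, h1,
        show dm j = c0 lam (m + j) * (((m + j).choose m : ℕ) : ℝ) from rfl]
      have e1 : (a1 + a2 + 1) / 2 = m + j + 1 := by omega
      have e2 : (a1 + a2 - 1) / 2 = m + j := by omega
      have e3 : (a1 - 1) / 2 = j := by omega
      rw [e1, e2, e3, c0]
      have hch : (((m + j).choose m : ℕ) : ℝ) = (((m + j).choose j : ℕ) : ℝ) := by
        have := Nat.choose_symm (le_add_self : j ≤ m + j)
        rw [show m + j - j = m by omega] at this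
        exact_mod_cast this
      rw [hch]
      ring
    · have h0 : oddExt dm a1 = 0 := oddExt_even (Nat.not_odd_iff_even.mp ha1)
      rw [h0, if_neg (by tauto), mul_zero, mul_zero]
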